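/- Let θ_E, G, z_L : ℝ → ℝ be differentiable with θ_E > 0, G > 0 and 1 + z_L > 0, and suppose θ_E(t)² = 4·G(t)·M·(1 + z_L(t))·C for constants M, C > 0. Then 2·θ_E'(t)/θ_E(t) = G'(t)/G(t) + z_L'(t)/(1 + z_L(t)) for all t. In particular, if the lens redshift obeys the drift law z_L' = (1 + z_L)H₀ - H_L, then 2θ̇_E/θ_E = Ġ/G + H₀ - H_L/(1 + z_L): the angular drift of the Einstein radius is sensitive both to the Hubble flow and to a time variation of the gravitational coupling, and reduces to 2θ̇_E/θ_E = H₀ - H_L/(1+z_L) when G is constant. -/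

import Mathlib

/-- Angular drift of the Einstein radius: if θ_E(t)² = 4G(t)M(1+z_L(t))C with
M, C > 0, then 2θ_E'/θ_E = G'/G + z_L'/(1+z_L); if moreover the lens redshift
obeys the drift law z_L' = (1+z_L)H₀ - H_L, then
2θ̇_E/θ_E = Ġ/G + H₀ - H_L/(1+z_L), reducing to 2θ̇_E/θ_E = H₀ - H_L/(1+z_L)
when G is constant. -/
theorem stmt19 (θE G zL : ℝ → ℝ) (M C H₀ HL : ℝ)
    (hθ : Differentiable ℝ θE) (hG : Differentiable ℝ G)
    (hz : Differentiable ℝ zL)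
    (hθpos : ∀ t, 0 < θE t) (hGpos : ∀ t, 0 < G t)
    (hzpos : ∀ t, 0 < 1 + zL t)
    (hM : 0 < M) (hC : 0 < C)
    (hlens : ∀ t, (θE t)^2 = 4 * G t * M * (1 + zL t) * C) :
    (∀ t, 2 * deriv θE t / θE t = deriv G t / G t + deriv zL t / (1 + zL t)) ∧
    ((∀ t, deriv zL t = (1 + zL t)*H₀ - HL) →
      ∀ t, 2 * deriv θE t / θE t = deriv G t / G t + H₀ - HL/(1 + zL t)) ∧
    ((∀ t, deriv zL t = (1 + zL t)*H₀ - HL) → (∀ t, deriv G t = 0) →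
      ∀ t, 2 * deriv θE t / θE t = H₀ - HL/(1 + zL t)) := by
  have key : ∀ t, 2 * θE t * deriv θE t =
      4 * M * C * (deriv G t * (1 + zL t) + G t * deriv zL t) := by
    intro t
    have hfun : (fun t => (θE t)^2) = fun t => 4 * G t * M * (1 + zL t) * C :=
      funext hlens
    have h1 : deriv (fun t => (θE t)^2) t = 2 * θE t * deriv θE t := by
      rw [show (fun t => (θE t)^2) = (fun x : ℝ => x^2) ∘ θE from rfl]
      rw [deriv_comp _ (differentiable_pow 2 _) (hθ t)]
      simp [mul_comm]
    have h2 : deriv (fun t => 4 * G t * M * (1 + zL t) * C) t =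
        4 * M * C * (deriv G t * (1 + zL t) + G t * deriv zL t) := by
      have : (fun t => 4 * G t * M * (1 + zL t) * C) =
          fun t => (4 * M * C) * (G t * (1 + zL t)) := by
        funext s; ring
      rw [this, deriv_const_mul (d := fun t => G t * (1 + zL t)) _ (((hG t).mul (((differentiable_const (1:ℝ)).add hz) t))),
        deriv_fun_mul (d := fun t => 1 + zL t) (hG t) ((differentiable_const (1:ℝ)).add hz t)]
      simp [deriv_const_add]
    rw [← h1, hfun, h2]
  have main : ∀ t, 2 * deriv θE t / θE t = deriv G t / G t + deriv zL t / (1 + zL t) := by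
    intro t
    have hθn := (hθpos t).ne'
    have hGn := (hGpos t).ne'
    have hzn := (hzpos t).ne'
    have hl := hlens t
    have hk := key t
    field_simp
    refine mul_right_cancel₀ hθn ?_
    linear_combination (G t * (1 + zL t)) * hk - (deriv G t * (1 + zL t) + deriv zL t * G t) * hl
  refine ⟨main, fun hd t => ?_, fun hd hg t => ?_⟩
  · have hzn := (hzpos t).ne'
    rw [main t, hd t]
    field_simp
    ring
  · have hzn := (hzpos t).ne'
    rw [main t, hd t, hg t, zero_div, zero_add]
    field_simp
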